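/- arXiv:math/0409160 — 3 statements merged into one kernel-verified Lean document; each statement's English description precedes it below -/
import Mathlib

section
/- Let φ₁,…,φ_N : U → ℂ be holomorphic functions on an open set U of a complex normed vector space E, and let ρ(z) = Σ_{k=1}^N |φ_k(z)|² be the associated euclidian rug function. Then for every z ∈ U and all vectors v, w ∈ E, the second real Fréchet derivative of ρ satisfies D²ρ(z)(v, w) + D²ρ(z)(i·v, i·w) = 4 Σ_{k=1}^N Re( (Dφ_k(z)v) · conj(Dφ_k(z)w) ). (This is the computation of the form −dd^cρ in the proof of Lemma 3.3.) -/
open Complex ContinuousLinearMap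

noncomputable def rugD1 {E : Type*} [NormedAddCommGroup E] [NormedSpace ℂ E] {N : ℕ}
    (φ : Fin N → E → ℂ) (φ' : Fin N → E → (E →L[ℂ] ℂ)) (y : E) : E →L[ℝ] ℝ :=
  ∑ k, Complex.reCLM.comp
    (φ k y • ((Complex.conjCLE : ℂ →L[ℝ] ℂ).comp ((φ' k y).restrictScalars ℝ)) +
     Complex.conjCLE (φ k y) • (φ' k y).restrictScalars ℝ)

theorem rugD1_spec {E : Type*} [NormedAddCommGroup E] [NormedSpace ℂ E]
    {U : Set E} {N : ℕ} {φ : Fin N → E → ℂ} {φ' : Fin N → E → (E →L[ℂ] ℂ)}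
    (hφ : ∀ k, ∀ y ∈ U, HasFDerivAt (φ k) (φ' k y) y)
    {y : E} (hy : y ∈ U) :
    HasFDerivAt (fun t => ∑ k, Complex.normSq (φ k t)) (rugD1 φ φ' y) y := by
  have h : ∀ k : Fin N, HasFDerivAt (fun t => (φ k t * Complex.conjCLE (φ k t)).re)
      (Complex.reCLM.comp
        (φ k y • ((Complex.conjCLE : ℂ →L[ℝ] ℂ).comp ((φ' k y).restrictScalars ℝ)) +
         Complex.conjCLE (φ k y) • (φ' k y).restrictScalars ℝ)) y := by
    intro k
    have hφR := (hφ k y hy).restrictScalars ℝ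
    have hconj := ((Complex.conjCLE : ℂ →L[ℝ] ℂ).hasFDerivAt).comp y hφR
    have hmul := hφR.mul hconj
    exact Complex.reCLM.hasFDerivAt.comp y hmul
  have hsum := HasFDerivAt.sum (u := Finset.univ) (fun k _ => h k)
  refine hsum.congr_of_eventuallyEq (Filter.Eventually.of_forall fun t => ?_)
  simp [Complex.mul_conj]



/-- Let `φ₁, …, φ_N : U → ℂ` be holomorphic functions on an open set `U` of a
complex normed vector space `E`, and let `ρ z = ∑ k, |φ k z|²` be the associated euclidian rug
function.  Then for every `z ∈ U` and all `v w : E`, the second real Fréchet derivative `ρ''` of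
`ρ` at `z` satisfies
`ρ'' v w + ρ'' (i•v) (i•w) = 4 ∑ k, Re ((Dφ_k(z) v) * conj (Dφ_k(z) w))`. -/
theorem milnor_rug_second_derivative
    {E : Type*} [NormedAddCommGroup E] [NormedSpace ℂ E]
    {U : Set E} (hU : IsOpen U) {z : E} (hz : z ∈ U)
    {N : ℕ} (φ : Fin N → E → ℂ)
    (φ' : Fin N → E → (E →L[ℂ] ℂ)) (φ'' : Fin N → E → (E →L[ℂ] E →L[ℂ] ℂ))
    (hφ : ∀ k, ∀ y ∈ U, HasFDerivAt (φ k) (φ' k y) y)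
    (hφ' : ∀ k, ∀ y ∈ U, HasFDerivAt (φ' k) (φ'' k y) y)
    (ρ' : E → (E →L[ℝ] ℝ)) (ρ'' : E →L[ℝ] E →L[ℝ] ℝ)
    (hρ' : ∀ y ∈ U, HasFDerivAt (fun y => ∑ k, Complex.normSq (φ k y)) (ρ' y) y)
    (hρ'' : HasFDerivAt ρ' ρ'' z)
    (v w : E) :
    ρ'' v w + ρ'' (Complex.I • v) (Complex.I • w)
      = 4 * ∑ k, (φ' k z v * (starRingEnd ℂ) (φ' k z w)).re := by
  have hev : (fun y => rugD1 φ φ' y) =ᶠ[nhds z] ρ' :=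
    Filter.eventuallyEq_of_mem (hU.mem_nhds hz)
      (fun y hy => ((hρ' y hy).unique (rugD1_spec hφ hy)).symm)
  have h2 : HasFDerivAt (fun y => rugD1 φ φ' y) ρ'' z := hρ''.congr_of_eventuallyEq hev
  have main : ∀ v0 w0 : E, ρ'' v0 w0
      = ∑ k, (2 * ((starRingEnd ℂ) (φ k z) * (φ'' k z v0 w0)).re
            + 2 * ((φ' k z v0 * (starRingEnd ℂ) (φ' k z w0)).re)) := by
    intro v0 w0
    have h3 := (ContinuousLinearMap.apply ℝ ℝ w0).hasFDerivAt.comp z h2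
    -- build explicit second derivative
    set cj : ℂ →L[ℝ] ℂ := (Complex.conjCLE : ℂ →L[ℝ] ℂ) with hcj
    set evw : (E →L[ℂ] ℂ) →L[ℂ] ℂ := ContinuousLinearMap.apply ℂ ℂ w0 with hevw
    have hk : ∀ k : Fin N, HasFDerivAt
        (fun y => (φ k y * cj (evw (φ' k y)) + cj (φ k y) * evw (φ' k y)).re)
        (Complex.reCLM.comp
          ((φ k z • (cj.comp ((evw.comp (φ'' k z)).restrictScalars ℝ)) +
            cj (evw (φ' k z)) • (φ' k z).restrictScalars ℝ) +
           (cj (φ k z) • ((evw.comp (φ'' k z)).restrictScalars ℝ) +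
            evw (φ' k z) • cj.comp ((φ' k z).restrictScalars ℝ)))) z := by
      intro k
      have hak := (hφ k z hz).restrictScalars ℝ
      have hbk := (evw.hasFDerivAt.comp z (hφ' k z hz)).restrictScalars ℝ
      have hck := (cj.hasFDerivAt).comp z hak
      have hdk := (cj.hasFDerivAt).comp z hbk
      have hm1 := hak.mul hdk
      have hm2 := hck.mul hbk
      exact Complex.reCLM.hasFDerivAt.comp z (hm1.add hm2)
    have hsum := HasFDerivAt.fun_sum (u := Finset.univ) (fun k _ => hk k)
    have h4 : HasFDerivAt
        (fun y => ∑ k, (φ k y * cj (evw (φ' k y)) + cj (φ k y) * evw (φ' k y)).re)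
        ((ContinuousLinearMap.apply ℝ ℝ w0).comp ρ'') z := by
      refine h3.congr_of_eventuallyEq (Filter.Eventually.of_forall fun y => ?_) |>.congr_of_eventuallyEq (Filter.Eventually.of_forall fun y => rfl)
      simp [rugD1, Function.comp, ContinuousLinearMap.sum_apply, smul_eq_mul, hcj, hevw,
        mul_comm]
    have huniq := h4.unique hsum
    have : ρ'' v0 w0 = ((ContinuousLinearMap.apply ℝ ℝ w0).comp ρ'') v0 := rfl
    rw [this, huniq]
    simp [hcj, hevw, smul_eq_mul, Complex.mul_re, Complex.conj_re, Complex.conj_im]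
    ring_nf
    rw [Finset.sum_congr rfl]
    intro k _
    ring
  rw [main v w, main (Complex.I • v) (Complex.I • w), ← Finset.sum_add_distrib,
    Finset.mul_sum]
  refine Finset.sum_congr rfl fun k _ => ?_
  have e1 : φ' k z (Complex.I • v) = Complex.I * φ' k z v := by
    rw [map_smul, smul_eq_mul]
  have e2 : φ' k z (Complex.I • w) = Complex.I * φ' k z w := by
    rw [map_smul, smul_eq_mul]
  have e3 : φ'' k z (Complex.I • v) (Complex.I • w)
      = Complex.I * (Complex.I * φ'' k z v w) := by
    simp [map_smul, smul_eq_mul]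
  rw [e1, e2, e3]
  simp [Complex.mul_re, Complex.mul_im, Complex.conj_re, Complex.conj_im,
    Complex.I_re, Complex.I_im]
  ring
end

section
/- Let φ₁,…,φ_N : U → ℂ be holomorphic functions on an open set U of a complex normed vector space E, and let ρ(z) = Σ_{k=1}^N |φ_k(z)|² be the associated euclidian rug function. For z ∈ U define the Levi form L_z(v) := D²ρ(z)(v, v) + D²ρ(z)(i·v, i·v). Then L_z(v) = 4 Σ_{k=1}^N |Dφ_k(z)v|² ≥ 0 for every v ∈ E, and L_z(v) > 0 for every v ≠ 0 if and only if the ℂ-linear map E → ℂ^N, v ↦ (Dφ₁(z)v, …, Dφ_N(z)v), is injective. (Lemma 3.3: ρ is strictly pluri-subharmonic at z exactly where the map Φ = (φ₁,…,φ_N) is an immersion.) -/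
set_option maxHeartbeats 1000000
open ContinuousLinearMap Complex


/-- (Lemma 3.3.)  For the euclidian rug function `ρ z = ∑ k, |φ k z|²`
associated with holomorphic functions `φ₁, …, φ_N` on an open set `U` of a complex normed
space, the Levi form `L_z(v) := D²ρ(z)(v,v) + D²ρ(z)(i•v, i•v)` satisfies
`L_z(v) = 4 ∑ k, |Dφ_k(z) v|² ≥ 0`, and `L_z(v) > 0` for every `v ≠ 0` if and only if the
ℂ-linear map `v ↦ (Dφ₁(z) v, …, Dφ_N(z) v)` is injective. -/
theorem milnor_rug_spsh_iff_immersion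
    {E : Type*} [NormedAddCommGroup E] [NormedSpace ℂ E]
    {U : Set E} (hU : IsOpen U) {z : E} (hz : z ∈ U)
    {N : ℕ} (φ : Fin N → E → ℂ)
    (φ' : Fin N → E → (E →L[ℂ] ℂ)) (φ'' : Fin N → E → (E →L[ℂ] E →L[ℂ] ℂ))
    (hφ : ∀ k, ∀ y ∈ U, HasFDerivAt (φ k) (φ' k y) y)
    (hφ' : ∀ k, ∀ y ∈ U, HasFDerivAt (φ' k) (φ'' k y) y)
    (ρ' : E → (E →L[ℝ] ℝ)) (ρ'' : E →L[ℝ] E →L[ℝ] ℝ)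
    (hρ' : ∀ y ∈ U, HasFDerivAt (fun y => ∑ k, Complex.normSq (φ k y)) (ρ' y) y)
    (hρ'' : HasFDerivAt ρ' ρ'' z) :
    (∀ v : E,
        ρ'' v v + ρ'' (Complex.I • v) (Complex.I • v)
          = 4 * ∑ k, Complex.normSq (φ' k z v) ∧
        0 ≤ ρ'' v v + ρ'' (Complex.I • v) (Complex.I • v)) ∧
    ((∀ v : E, v ≠ 0 → 0 < ρ'' v v + ρ'' (Complex.I • v) (Complex.I • v)) ↔
      Function.Injective (fun v : E => (fun k : Fin N => φ' k z v))) := by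
  classical
  set conjL : ℂ →L[ℝ] ℂ := Complex.conjCLE.toContinuousLinearMap with hconjL
  set T : (E →L[ℝ] ℂ) →L[ℝ] (E →L[ℝ] ℝ) :=
    ContinuousLinearMap.compL ℝ E ℂ ℝ Complex.reCLM with hT
  set d1 : Fin N → E → (E →L[ℝ] ℝ) := fun k y =>
    (2:ℝ) • (T ((starRingEnd ℂ (φ k y)) • ((φ' k y).restrictScalars ℝ))) with hd1def
  -- first derivative identification
  have hd1 : ∀ k, ∀ y ∈ U, HasFDerivAt (fun w => Complex.normSq (φ k w)) (d1 k y) y := by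
    intro k y hy
    have hR := (hφ k y hy).restrictScalars ℝ
    have hc : HasFDerivAt (fun w => (starRingEnd ℂ) (φ k w))
        (conjL.comp ((φ' k y).restrictScalars ℝ)) y := conjL.hasFDerivAt.comp y hR
    have hm := hR.mul' hc
    have hre := Complex.reCLM.hasFDerivAt.comp y hm
    have hfun : (fun w => Complex.normSq (φ k w))
        = fun w => Complex.reCLM (φ k w * (starRingEnd ℂ) (φ k w)) := by
      funext w
      simp [Complex.mul_conj]
    rw [hfun]
    refine hre.congr_fderiv ?_
    ext v
    simp [hd1def, hconjL, hT, Complex.mul_re, Complex.conj_re, Complex.conj_im,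
      smul_eq_mul]
    ring
  have hsum : ∀ y ∈ U, HasFDerivAt (fun w => ∑ k, Complex.normSq (φ k w))
      (∑ k, d1 k y) y := fun y hy => HasFDerivAt.fun_sum (fun k _ => hd1 k y hy)
  have hev : ρ' =ᶠ[nhds z] (fun y => ∑ k, d1 k y) := by
    filter_upwards [hU.mem_nhds hz] with y hy
    exact (hρ' y hy).unique (hsum y hy)
  -- second derivative
  set J : (E →L[ℂ] ℂ) →L[ℝ] (E →L[ℝ] ℂ) :=
    ContinuousLinearMap.restrictScalarsL ℂ E ℂ ℝ ℝ with hJ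
  set Bk : Fin N → (E →L[ℝ] (E →L[ℝ] ℝ)) := fun k =>
    (2:ℝ) • (T.comp ((starRingEnd ℂ (φ k z)) • (J.comp ((φ'' k z).restrictScalars ℝ))
      + (conjL.comp ((φ' k z).restrictScalars ℝ)).smulRight ((φ' k z).restrictScalars ℝ))) with hBk
  have hB : HasFDerivAt (fun y => ∑ k, d1 k y) (∑ k, Bk k) z := by
    apply HasFDerivAt.fun_sum
    intro k _
    have h2 : HasFDerivAt (fun y => (φ' k y).restrictScalars ℝ)
        (J.comp ((φ'' k z).restrictScalars ℝ)) z :=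
      J.hasFDerivAt.comp z ((hφ' k z hz).restrictScalars ℝ)
    have h1 : HasFDerivAt (fun y => (starRingEnd ℂ) (φ k y))
        (conjL.comp ((φ' k z).restrictScalars ℝ)) z :=
      conjL.hasFDerivAt.comp z ((hφ k z hz).restrictScalars ℝ)
    have h3 := h1.smul h2
    have h4 := T.hasFDerivAt.comp z h3
    exact h4.const_smul (2:ℝ)
  have hρ''eq : ρ'' = ∑ k, Bk k := by
    have := hρ''.congr_of_eventuallyEq hev.symm
    exact this.unique hB
  -- evaluate Levi form
  have key : ∀ v : E, ρ'' v v + ρ'' (Complex.I • v) (Complex.I • v)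
      = 4 * ∑ k, Complex.normSq (φ' k z v) := by
    intro v
    rw [hρ''eq]
    simp only [ContinuousLinearMap.sum_apply, Finset.mul_sum, ← Finset.sum_add_distrib]
    refine Finset.sum_congr rfl (fun k _ => ?_)
    simp only [hBk, hT, hJ, hconjL, ContinuousLinearMap.smul_apply,
      ContinuousLinearMap.coe_comp', Function.comp_apply, ContinuousLinearMap.add_apply,
      ContinuousLinearMap.smulRight_apply,
      ContinuousLinearMap.compL_apply, Complex.reCLM_apply,
      ContinuousLinearMap.coe_restrictScalars', Complex.conjCLE_apply, map_smul,
      smul_eq_mul]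
    have hJap : ∀ (f : E →L[ℂ] ℂ) (w : E),
        (ContinuousLinearMap.restrictScalarsL ℂ E ℂ ℝ ℝ) f w = f w := fun f w => rfl
    have hconjap : ∀ w : ℂ, Complex.conjCLE w = (starRingEnd ℂ) w := fun _ => rfl
    simp only [hJap, hconjap, map_smul, ContinuousLinearMap.smul_apply,
      ContinuousLinearEquiv.coe_coe, Complex.conjCLE_apply, smul_eq_mul]
    simp only [Complex.add_re, Complex.mul_re, Complex.mul_im, Complex.conj_re,
      Complex.conj_im, Complex.I_re, Complex.I_im, Complex.normSq_apply]
    ring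
  refine ⟨fun v => ⟨key v, ?_⟩, ?_⟩
  · rw [key v]
    have : (0:ℝ) ≤ ∑ k, Complex.normSq (φ' k z v) :=
      Finset.sum_nonneg fun k _ => Complex.normSq_nonneg _
    linarith
  constructor
  · intro h v w hvw
    by_contra hne
    have hvw0 : ∀ k, φ' k z (v - w) = 0 := by
      intro k
      have hk := congrFun hvw k
      simp only [map_sub]
      simpa [sub_eq_zero] using hk
    have hpos := h (v - w) (sub_ne_zero.mpr hne)
    rw [key] at hpos
    simp [hvw0] at hpos
  · intro hinj v hv
    rw [key]
    have h0 : ∃ k, φ' k z v ≠ 0 := by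
      by_contra hall
      push_neg at hall
      have : (fun k => φ' k z v) = (fun k => φ' k z (0:E)) := by
        funext k; simp [hall k]
      exact hv (hinj this)
    obtain ⟨k0, hk0⟩ := h0
    have hpos : 0 < ∑ k, Complex.normSq (φ' k z v) :=
      Finset.sum_pos' (fun k _ => Complex.normSq_nonneg _)
        ⟨k0, Finset.mem_univ _, Complex.normSq_pos.mpr hk0⟩
    linarith
end

section
/- Let E be a complex inner product space with inner product ⟪·,·⟫ (conjugate-linear in the first variable), U ⊆ E open, and φ : U → ℂ complex differentiable at z ∈ U with φ(z) ∈ ℂ ∖ ℝ_{≤0}. Suppose g ∈ E is the hermitian gradient of φ at z, i.e. Dφ(z)v = ⟪g, v⟫ for all v ∈ E. Then the vector (i / conj(φ(z)))·g is the gradient of arg∘φ at z with respect to the real inner product Re⟪·,·⟫: for every v ∈ E, the real Fréchet derivative of z ↦ arg(φ(z)) at z applied to v equals Re⟪(i / conj(φ(z)))·g, v⟫. (Lemma 3.9, part 2: ∇ arg φ = i·∇φ / conj(φ).) -/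
/-- (Lemma 3.9, part 2: `∇ arg φ = i ∇φ / conj φ`.)  Let `E` be a complex
inner product space, `U ⊆ E` open, `φ : U → ℂ` complex differentiable at `z ∈ U` with
`φ z` in the slit plane, and let `g` be the hermitian gradient of `φ` at `z`.  Then the
vector `(i / conj (φ z)) • g` is the gradient of `arg ∘ φ` at `z` with respect to the real
inner product `Re ⟪·,·⟫`. -/
theorem gradient_arg_comp
    {E : Type*} [NormedAddCommGroup E] [InnerProductSpace ℂ E]
    {U : Set E} (hU : IsOpen U) {z : E} (hz : z ∈ U)
    {φ : E → ℂ} {φ' : E →L[ℂ] ℂ} (hφ : HasFDerivAt φ φ' z)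
    (hslit : φ z ∈ Complex.slitPlane)
    (g : E) (hg : ∀ v : E, φ' v = (inner ℂ g v : ℂ)) :
    DifferentiableAt ℝ (fun y => (φ y).arg) z ∧
    ∀ v : E, fderiv ℝ (fun y => (φ y).arg) z v
        = (inner ℂ ((Complex.I / (starRingEnd ℂ) (φ z)) • g) v : ℂ).re := by
  have hlog : HasFDerivAt (fun y => Complex.log (φ y)) ((φ z)⁻¹ • φ') z :=
    hφ.clog hslit
  have him : HasFDerivAt (fun y => (Complex.log (φ y)).im)
      (Complex.imCLM.comp (((φ z)⁻¹ • φ').restrictScalars ℝ)) z :=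
    (Complex.imCLM.hasFDerivAt).comp z (hlog.restrictScalars ℝ)
  have heq : (fun y => (Complex.log (φ y)).im) = fun y => (φ y).arg := by
    funext y; exact Complex.log_im (φ y)
  rw [heq] at him
  have hφz : φ z ≠ 0 := Complex.slitPlane_ne_zero hslit
  refine ⟨him.differentiableAt, fun v => ?_⟩
  rw [him.fderiv]
  simp only [ContinuousLinearMap.coe_comp', Function.comp_apply,
    ContinuousLinearMap.coe_restrictScalars', ContinuousLinearMap.smul_apply,
    Complex.imCLM_apply, hg, inner_smul_left]
  rw [map_div₀, Complex.conj_I, Complex.conj_conj]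
  set w : ℂ := (inner ℂ g v : ℂ)
  have h2 : -Complex.I / φ z * w = -(Complex.I * ((φ z)⁻¹ * w)) := by
    field_simp
  rw [h2]
  simp [Complex.mul_re, Complex.I_re, Complex.I_im]
end
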